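/- Let C > 0, and for each k let νₖ = (1/dₖ) Σᵢ δ_{λₖ,ᵢ/k} be a probability measure on ℝ with all λₖ,ᵢ/k ≤ C, where dₖ grows at least linearly in k. Suppose there exist constants d₀, m, k₀, C₄ > 0 such that for all k > k₀ and all i with d₀ < i ≤ d₀ + (k−k₀−1)m: λₖ,ᵢ/k ≥ 6 log((k − k₀ − ⌈(i−d₀)/m⌉)/k) − C₄, and the number of indices i outside this range with λₖ,ᵢ/k finite contributes at most d₀ + m. Then the family (νₖ) is uniformly tight: for every ε > 0 there exist a > 0 and k₁ such that νₖ((−∞, −a)) < ε for all k ≥ k₁. -/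

import Mathlib

lemma count_interval {N : ℕ} (P : Fin N → Prop) [DecidablePred P] (X Y : ℝ)
    (hXY : X ≤ Y)
    (h : ∀ i, P i → X < (i : ℕ) + 1 ∧ ((i : ℕ) + 1 : ℝ) ≤ Y) :
    ((Finset.univ.filter P).card : ℝ) ≤ Y - X + 1 := by
  have hcard : (Finset.univ.filter P).card ≤ (Finset.Ioc ⌊X⌋ ⌊Y⌋).card := by
    refine Finset.card_le_card_of_injOn (fun i => ((i : ℕ) + 1 : ℤ)) ?_ ?_
    · intro i hi
      rw [Finset.mem_coe, Finset.mem_filter] at hi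
      obtain ⟨h1, h2⟩ := h i hi.2
      simp only [Finset.mem_coe, Finset.mem_Ioc]
      constructor
      · rw [Int.floor_lt]; push_cast; exact h1
      · rw [Int.le_floor]; push_cast; exact h2
    · intro i _ j _ hij
      simp only at hij
      have : (i : ℕ) = (j : ℕ) := by omega
      exact Fin.ext this
  have hfl : ⌊X⌋ ≤ ⌊Y⌋ := Int.floor_le_floor hXY
  have h2 : ((Finset.Ioc ⌊X⌋ ⌊Y⌋).card : ℝ) ≤ Y - X + 1 := by
    rw [Int.card_Ioc]
    have h3 : ((⌊Y⌋ - ⌊X⌋).toNat : ℤ) = ⌊Y⌋ - ⌊X⌋ := Int.toNat_of_nonneg (by omega)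
    have h4 : ((⌊Y⌋ - ⌊X⌋).toNat : ℝ) = (⌊Y⌋ : ℝ) - ⌊X⌋ := by exact_mod_cast h3
    rw [h4]
    have := Int.floor_le Y
    have := Int.lt_floor_add_one X
    linarith
  exact le_trans (Nat.cast_le.mpr hcard) h2

set_option maxHeartbeats 1000000 in
/-- Uniform tightness of the empirical measures `νₖ = (1/dₖ) ∑ᵢ δ_{λₖ,ᵢ/k}`: under the
upper bound `λₖ,ᵢ/k ≤ C`, at-least-linear growth of `dₖ`, and the lower bounds
`λₖ,ᵢ/k ≥ 6 log((k − k₀ − ⌈(i−d₀)/m⌉)/k) − C₄` for indices `d₀ < i ≤ d₀ + (k−k₀−1)m`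
(with at most `d₀ + m` indices outside this range), for every `ε > 0` there are
`a > 0` and `k₁` such that `νₖ((−∞,−a)) < ε` for all `k ≥ k₁`. -/
theorem stmt_8 (C : ℝ) (hC : 0 < C) (d : ℕ → ℕ)
    (lam : (k : ℕ) → Fin (d k) → ℝ)
    (hupper : ∀ (k : ℕ) (i : Fin (d k)), lam k i / k ≤ C)
    (hlin : ∃ c : ℝ, 0 < c ∧ ∃ K : ℕ, ∀ k ≥ K, c * (k : ℝ) ≤ (d k : ℝ))
    (d₀ m k₀ : ℕ) (hd₀ : 0 < d₀) (hm : 0 < m) (hk₀ : 0 < k₀)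
    (C₄ : ℝ) (hC₄ : 0 < C₄)
    (hlow : ∀ k > k₀, ∀ i : Fin (d k),
      (d₀ : ℝ) < (i : ℕ) + 1 → ((i : ℕ) + 1 : ℝ) ≤ d₀ + ((k : ℝ) - k₀ - 1) * m →
      6 * Real.log (((k : ℝ) - k₀ - (⌈(((i : ℕ) + 1 : ℝ) - d₀) / (m : ℝ)⌉ : ℤ)) / k) - C₄
        ≤ lam k i / k)
    (hout : ∀ k > k₀,
      (Finset.univ.filter (fun i : Fin (d k) =>
        ¬((d₀ : ℝ) < (i : ℕ) + 1 ∧ ((i : ℕ) + 1 : ℝ) ≤ d₀ + ((k : ℝ) - k₀ - 1) * m))).card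
        ≤ d₀ + m) :
    ∀ ε : ℝ, 0 < ε → ∃ a : ℝ, 0 < a ∧ ∃ k₁ : ℕ, ∀ k ≥ k₁,
      ((Finset.univ.filter (fun i : Fin (d k) => lam k i / k < -a)).card : ℝ) / (d k) < ε := by
  obtain ⟨c, hc, K, hK⟩ := hlin
  intro ε hε
  have hm' : (0 : ℝ) < m := by exact_mod_cast hm
  set δ : ℝ := min (c * ε / (4 * m)) (1 / 2) with hδdef
  have hδpos : 0 < δ := lt_min (by positivity) (by norm_num)
  have hδlt1 : δ < 1 := lt_of_le_of_lt (min_le_right _ _) (by norm_num)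
  set a : ℝ := C₄ - 6 * Real.log δ with hadef
  have hlogδ : Real.log δ < 0 := Real.log_neg hδpos hδlt1
  have hapos : 0 < a := by simp only [hadef]; nlinarith
  refine ⟨a, hapos, ?_⟩
  obtain ⟨N, hN⟩ := exists_nat_gt (2 * ((d₀ : ℝ) + m + 2) / (c * ε))
  refine ⟨max (max K (k₀ + 1)) (N + 1), fun k hk => ?_⟩
  have hkK : k ≥ K := le_trans (le_trans (le_max_left _ _) (le_max_left _ _)) hk
  have hkk₀ : k > k₀ := by
    have := le_trans (le_trans (le_max_right _ _) (le_max_left _ _)) hk; omega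
  have hkN : (N : ℝ) ≤ k := by
    have : N + 1 ≤ k := le_trans (le_max_right _ _) hk
    exact_mod_cast Nat.le_of_succ_le this
  have hkpos : (0 : ℝ) < k := by
    have : 0 < k := by omega
    exact_mod_cast this
  have hck : (0 : ℝ) < c * k := by positivity
  have hdk : (0 : ℝ) < d k := lt_of_lt_of_le hck (hK k hkK)
  set X : ℝ := (d₀ : ℝ) + ((k : ℝ) - k₀ - δ * k - 1) * m with hXdef
  set Y : ℝ := (d₀ : ℝ) + ((k : ℝ) - k₀ - 1) * m with hYdef
  have hXY : X ≤ Y := by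
    have : 0 ≤ δ * k * m := by positivity
    simp only [hXdef, hYdef]; nlinarith
  -- the bad set is inside (outside ∪ mid)
  set B := Finset.univ.filter (fun i : Fin (d k) => lam k i / k < -a) with hBdef
  set Out := Finset.univ.filter (fun i : Fin (d k) =>
    ¬((d₀ : ℝ) < (i : ℕ) + 1 ∧ ((i : ℕ) + 1 : ℝ) ≤ d₀ + ((k : ℝ) - k₀ - 1) * m)) with hOutdef
  set Mid := Finset.univ.filter (fun i : Fin (d k) =>
    X < (i : ℕ) + 1 ∧ ((i : ℕ) + 1 : ℝ) ≤ Y) with hMiddef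
  have hsub : B ⊆ Out ∪ Mid := by
    intro i hi
    simp only [hBdef, Finset.mem_filter, Finset.mem_univ, true_and] at hi
    rw [Finset.mem_union]
    by_cases hcond : (d₀ : ℝ) < (i : ℕ) + 1 ∧ ((i : ℕ) + 1 : ℝ) ≤ d₀ + ((k : ℝ) - k₀ - 1) * m
    · right
      obtain ⟨h1, h2⟩ := hcond
      have hlo := hlow k hkk₀ i h1 h2
      set q : ℤ := ⌈(((i : ℕ) + 1 : ℝ) - d₀) / (m : ℝ)⌉ with hqdef
      set t : ℝ := ((k : ℝ) - k₀ - q) / k with htdef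
      have hlt : Real.log t < Real.log δ := by
        have : 6 * Real.log t - C₄ < -a := lt_of_le_of_lt hlo hi
        simp only [hadef] at this; linarith
      have htδ : t < δ := by
        by_cases ht : t ≤ 0
        · linarith
        · push_neg at ht
          calc t = Real.exp (Real.log t) := (Real.exp_log ht).symm
            _ < Real.exp (Real.log δ) := Real.exp_lt_exp.mpr hlt
            _ = δ := Real.exp_log hδpos
      have hq1 : (k : ℝ) - k₀ - q < δ * k := by
        have := (div_lt_iff₀ hkpos).mp htδ
        linarith [this]
      have hq2 : (q : ℝ) < (((i : ℕ) + 1 : ℝ) - d₀) / (m : ℝ) + 1 :=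
        Int.ceil_lt_add_one _
      have hq3 : (k : ℝ) - k₀ - δ * k - 1 < (((i : ℕ) + 1 : ℝ) - d₀) / (m : ℝ) := by
        linarith
      have hq4 : X < (i : ℕ) + 1 := by
        have h5 := (lt_div_iff₀ hm').mp hq3
        simp only [hXdef]
        linarith
      simp only [hMiddef, Finset.mem_filter, Finset.mem_univ, true_and]
      exact ⟨hq4, h2⟩
    · left
      simp only [hOutdef, Finset.mem_filter, Finset.mem_univ, true_and]
      exact hcond
  have hcardB : (B.card : ℝ) ≤ (d₀ : ℝ) + m + (Y - X + 1) := by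
    have h1 : B.card ≤ Out.card + Mid.card :=
      le_trans (Finset.card_le_card hsub) (Finset.card_union_le _ _)
    have h2n : Out.card ≤ d₀ + m := hout k hkk₀
    have h2 : (Out.card : ℝ) ≤ (d₀ : ℝ) + m := by exact_mod_cast h2n
    have h3 : (Mid.card : ℝ) ≤ Y - X + 1 := by
      apply count_interval _ X Y hXY
      intro i hi
      exact hi
    have h1' : (B.card : ℝ) ≤ (Out.card : ℝ) + Mid.card := by exact_mod_cast h1
    linarith
  have hYX : Y - X = δ * k * m := by simp only [hXdef, hYdef]; ring
  have hnum : (B.card : ℝ) ≤ (d₀ : ℝ) + m + 1 + δ * k * m := by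
    rw [hYX] at hcardB; linarith
  have hstep1 : (B.card : ℝ) / d k ≤ ((d₀ : ℝ) + m + 1 + δ * k * m) / (c * k) := by
    apply div_le_div₀ (by positivity) hnum hck (hK k hkK)
  have hstep2 : ((d₀ : ℝ) + m + 1 + δ * k * m) / (c * k)
      = ((d₀ : ℝ) + m + 1) / (c * k) + δ * m / c := by
    field_simp
  have h5 : δ * m / c ≤ ε / 4 := by
    have hδle : δ ≤ c * ε / (4 * m) := min_le_left _ _
    rw [div_le_div_iff₀ hc (by norm_num : (0:ℝ) < 4)]
    have hmul := mul_le_mul_of_nonneg_right hδle (le_of_lt hm')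
    have heq : c * ε / (4 * (m : ℝ)) * m = c * ε / 4 := by field_simp
    rw [heq] at hmul
    linarith
  have h6 : ((d₀ : ℝ) + m + 1) / (c * k) < ε / 2 := by
    rw [div_lt_div_iff₀ hck (by norm_num : (0:ℝ) < 2)]
    have hA : 2 * ((d₀ : ℝ) + m + 2) < N * (c * ε) :=
      (div_lt_iff₀ (by positivity)).mp hN
    have hmul := mul_le_mul_of_nonneg_left hkN (le_of_lt (mul_pos hc hε))
    nlinarith [hmul, hA]
  calc (B.card : ℝ) / d k ≤ ((d₀ : ℝ) + m + 1) / (c * k) + δ * m / c := by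
        rw [← hstep2]; exact hstep1
    _ < ε / 2 + ε / 4 := by linarith
    _ < ε := by linarith
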